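/- There exists n₀ such that for every integer n ≥ n₀ and every prime Δ with n⁴/2 ≤ Δ ≤ n⁴, there exists a set V of n² distinct {0,1}-vectors in (ZMod Δ)ⁿ such that for every integer k with √n ≤ k ≤ n and every subset W ⊆ V with |W| ≤ k/(22·log₂ k), the family of restrictions of the vectors of W to their last k coordinates is linearly independent over ZMod Δ (as vectors in (ZMod Δ)ᵏ). -/

import Mathlib

/-- The restriction of a vector `v ∈ (ZMod Δ)ⁿ` to its last `k` coordinates
(coordinates `n-k, …, n-1`). -/
def lastCoords {α : Type*} (n k : ℕ) (hk : k ≤ n) (v : Fin n → α) : Fin k → α :=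
  fun i => v ⟨n - k + i.1, by omega⟩

open Polynomial Finset

/-- Cauchy-type linear independence: if `∑ cᵢ/(x t - aᵢ) = 0` for `T ≥ card ι` distinct
points `x t`, all distinct from the `aᵢ`, and the `aᵢ` are distinct, then all `cᵢ = 0`. -/
lemma cauchy_core {F : Type*} [Field F] {ι : Type*} [Fintype ι] [DecidableEq ι]
    (a : ι → F) (ha : Function.Injective a) (x : ℕ → F) (T : ℕ)
    (hxinj : Set.InjOn x (Finset.range T))
    (hxa : ∀ t < T, ∀ i, x t ≠ a i)
    (hT : Fintype.card ι ≤ T)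
    (c : ι → F) (hc : ∀ t < T, ∑ i, c i * (x t - a i)⁻¹ = 0) :
    ∀ i, c i = 0 := by
  intro i₀
  have hcard : 1 ≤ Fintype.card ι := Fintype.card_pos_iff.mpr ⟨i₀⟩
  set P : F[X] := ∑ i, Polynomial.C (c i) * ∏ j ∈ Finset.univ.erase i, (X - C (a j)) with hP
  have hP0 : P = 0 := by
    apply Polynomial.eq_zero_of_natDegree_lt_card_of_eval_eq_zero P
      (f := fun t : Fin T => x t.1) (fun s t hst => by
        ext
        exact hxinj (by simp [s.2]) (by simp [t.2]) hst)
    · intro t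
      have ht : t.1 < T := t.2
      have hne : ∀ i, x t.1 - a i ≠ 0 := fun i => sub_ne_zero.mpr (hxa t.1 ht i)
      have key : ∀ i : ι, ∏ j ∈ Finset.univ.erase i, (x t.1 - a j)
          = (x t.1 - a i)⁻¹ * ∏ j, (x t.1 - a j) := by
        intro i
        rw [← Finset.mul_prod_erase Finset.univ _ (Finset.mem_univ i),
          inv_mul_cancel_left₀ (hne i)]
      simp only [hP, eval_finset_sum, eval_mul, eval_C, eval_prod, eval_sub, eval_X]
      calc ∑ i, c i * ∏ j ∈ Finset.univ.erase i, (x t.1 - a j)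
          = (∑ i, c i * (x t.1 - a i)⁻¹) * ∏ j, (x t.1 - a j) := by
            rw [Finset.sum_mul]; exact Finset.sum_congr rfl fun i _ => by rw [key i, mul_assoc]
        _ = 0 := by rw [hc t.1 ht, zero_mul]
    · rw [Fintype.card_fin]
      refine lt_of_le_of_lt ?_ (by omega : Fintype.card ι - 1 < T)
      apply Polynomial.natDegree_sum_le_of_forall_le
      intro i _
      refine le_trans (Polynomial.natDegree_C_mul_le _ _) ?_
      refine le_trans (Polynomial.natDegree_prod_le _ _) ?_
      have hb := Finset.sum_le_card_nsmul (Finset.univ.erase i)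
        (fun j => (X - C (a j)).natDegree) 1
        (fun j _ => Polynomial.natDegree_X_sub_C_le _)
      rw [Finset.card_erase_of_mem (Finset.mem_univ i), Finset.card_univ] at hb
      simpa using hb
  have := congrArg (Polynomial.eval (a i₀)) hP0
  rw [hP, eval_finset_sum, eval_zero] at this
  rw [Finset.sum_eq_single i₀ (fun i _ hi => by
    simp only [eval_mul, eval_C, eval_prod, eval_sub, eval_X]
    rw [Finset.prod_eq_zero (Finset.mem_erase.mpr ⟨Ne.symm hi, Finset.mem_univ i₀⟩)
      (by rw [sub_self]), mul_zero]) (fun h => absurd (Finset.mem_univ i₀) h)] at this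
  simp only [eval_mul, eval_C, eval_prod, eval_sub, eval_X] at this
  have hprod : ∏ j ∈ Finset.univ.erase i₀, (a i₀ - a j) ≠ 0 := by
    rw [Finset.prod_ne_zero_iff]
    intro j hj
    exact sub_ne_zero.mpr fun h => (Finset.mem_erase.mp hj).1 (ha h).symm
  exact (mul_eq_zero.mp this).resolve_right hprod

lemma sum_bits (L : ℕ) : ∀ v : ℕ, v < 2^L → ∑ j ∈ Finset.range L, (v / 2^j % 2) * 2^j = v := by
  induction L with
  | zero => intro v hv; interval_cases v; simp
  | succ L ih =>
    intro v hv
    rw [Finset.sum_range_succ']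
    have h1 : ∀ j, v / 2^(j+1) % 2 * 2^(j+1) = 2 * ((v / 2) / 2^j % 2 * 2^j) := by
      intro j
      have : v / 2^(j+1) = (v/2) / 2^j := by
        rw [pow_succ', Nat.div_div_eq_div_mul]
      rw [this, pow_succ]
      ring
    simp only [h1]
    rw [← Finset.mul_sum, ih (v / 2) (by rw [pow_succ] at hv; omega)]
    simp only [pow_zero, Nat.div_one, mul_one]
    omega

/-- Reconstructing a `ZMod Δ` element from its bits. -/
lemma bits_eq {Δ L : ℕ} [NeZero Δ] (hΔ2L : Δ ≤ 2^L) (z : ZMod Δ) :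
    ∑ j ∈ Finset.range L, (2^j : ZMod Δ) * ((z.val / 2^j % 2 : ℕ) : ZMod Δ) = z := by
  have hv : z.val < 2^L := lt_of_lt_of_le (ZMod.val_lt z) hΔ2L
  calc ∑ j ∈ Finset.range L, (2^j : ZMod Δ) * ((z.val / 2^j % 2 : ℕ) : ZMod Δ)
      = ((∑ j ∈ Finset.range L, (z.val / 2^j % 2) * 2^j : ℕ) : ZMod Δ) := by
        push_cast
        exact Finset.sum_congr rfl fun j _ => (mul_comm _ _)
    _ = ((z.val : ℕ) : ZMod Δ) := by rw [sum_bits L _ hv]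
    _ = z := by rw [ZMod.natCast_val, ZMod.cast_id]

lemma cast_mod_two {Δ : ℕ} (m : ℕ) :
    ((m % 2 : ℕ) : ZMod Δ) = 0 ∨ ((m % 2 : ℕ) : ZMod Δ) = 1 := by
  rcases Nat.mod_two_eq_zero_or_one m with h | h <;> rw [h] <;> simp

/-- The vector construction: bits of `(x_t - a)⁻¹` packed into blocks of `L` coordinates,
with block `t` occupying coordinates `n-(t+1)L, …, n-tL-1`. -/
def cVec (n L Δ : ℕ) (a : ZMod Δ) : Fin n → ZMod Δ := fun i =>
  if ((n - 1 - i.1) / L + 1) * L ≤ n then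
    (((((n^2 + (n - 1 - i.1) / L : ℕ) : ZMod Δ) - a)⁻¹.val
        / 2^((n - 1 - i.1) % L) % 2 : ℕ) : ZMod Δ)
  else 0

lemma cVec_block {Δ : ℕ} (n L : ℕ) (a : ZMod Δ) (t j : ℕ) (hL : 0 < L) (hj : j < L)
    (htn : (t+1)*L ≤ n) (hp : t*L + j < n) :
    cVec n L Δ a ⟨n - 1 - (t*L + j), by omega⟩ =
      (((((n^2 + t : ℕ) : ZMod Δ) - a)⁻¹.val / 2^j % 2 : ℕ) : ZMod Δ) := by
  have h1 : n - 1 - (n - 1 - (t*L + j)) = t*L + j := by omega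
  have h2 : (t*L + j) / L = t := by
    rw [mul_comm, Nat.mul_add_div hL, Nat.div_eq_of_lt hj, add_zero]
  have h3 : (t*L + j) % L = j := by
    rw [mul_comm, Nat.mul_add_mod, Nat.mod_eq_of_lt hj]
  simp only [cVec, h1, h2, h3, if_pos htn]

theorem stmt0 :
    ∃ n₀ : ℕ, ∀ n : ℕ, n₀ ≤ n → ∀ Δ : ℕ, Δ.Prime →
      (n : ℝ)^4 / 2 ≤ (Δ : ℝ) → (Δ : ℝ) ≤ (n : ℝ)^4 →
      ∃ V : Finset (Fin n → ZMod Δ),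
        V.card = n^2 ∧
        (∀ v ∈ V, ∀ i, v i = 0 ∨ v i = 1) ∧
        (∀ k : ℕ, Real.sqrt n ≤ (k : ℝ) → ∀ hk : k ≤ n,
          ∀ W ⊆ V, (W.card : ℝ) ≤ (k : ℝ) / (22 * Real.logb 2 k) →
            LinearIndependent (ZMod Δ) (fun w : W => lastCoords n k hk w.1)) := by
  classical
  use 2^20
  intro n hn Δ hΔ hΔl hΔu
  haveI : Fact Δ.Prime := ⟨hΔ⟩
  haveI : NeZero Δ := ⟨hΔ.pos.ne'⟩
  set L := Nat.clog 2 Δ with hLdef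
  have hnR : (2^20 : ℝ) ≤ (n : ℝ) := by exact_mod_cast hn
  have hnpos : (0:ℝ) < n := by linarith [hnR]
  have hΔ2 : 2 ≤ Δ := hΔ.two_le
  have hL1 : 1 ≤ L := Nat.clog_pos one_lt_two hΔ2
  have hL0 : 0 < L := hL1
  have hΔ2L : Δ ≤ 2^L := Nat.le_pow_clog one_lt_two Δ
  have h2LΔ : 2^(L-1) < Δ := Nat.pow_pred_clog_lt_self one_lt_two hΔ.one_lt
  -- real bound on L
  have hΔpos : (0:ℝ) < (Δ:ℝ) := by positivity
  have hLreal : (L:ℝ) ≤ 4 * Real.logb 2 n + 1 := by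
    have h1 : ((L-1 : ℕ) : ℝ) < Real.logb 2 (Δ:ℝ) := by
      have h2 : ((2:ℝ))^(L-1 : ℕ) < (Δ:ℝ) := by exact_mod_cast h2LΔ
      have h3 : Real.logb 2 ((2:ℝ)^(L-1:ℕ)) < Real.logb 2 (Δ:ℝ) :=
        Real.logb_lt_logb one_lt_two (by positivity) h2
      rwa [Real.logb_pow, Real.logb_self_eq_one one_lt_two, mul_one] at h3
    have h4 : Real.logb 2 (Δ:ℝ) ≤ Real.logb 2 ((n:ℝ)^4) :=
      Real.logb_le_logb_of_le one_lt_two hΔpos hΔu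
    rw [Real.logb_pow] at h4
    have h5 : ((L-1:ℕ):ℝ) = (L:ℝ) - 1 := by
      rw [Nat.cast_sub hL1]; norm_num
    rw [h5] at h1
    push_cast at h4 ⊢
    linarith
  have hsqrt_sq : Real.sqrt n * Real.sqrt n = (n:ℝ) := Real.mul_self_sqrt (le_of_lt hnpos)
  have hs1024 : (1024:ℝ) ≤ Real.sqrt n := by
    rw [show (1024:ℝ) = Real.sqrt (1024^2) by rw [Real.sqrt_sq (by norm_num)]]
    exact Real.sqrt_le_sqrt (by norm_num at hnR ⊢; linarith)
  have hlog3 : Real.logb 2 n ≤ 3 * Real.sqrt n := by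
    have h1 : Real.log n = 2 * Real.log (Real.sqrt n) := by
      rw [Real.log_sqrt (le_of_lt hnpos)]; ring
    have h2 : Real.log (Real.sqrt n) ≤ Real.sqrt n - 1 :=
      Real.log_le_sub_one_of_pos (by positivity)
    have h3 := Real.log_two_gt_d9
    rw [Real.logb, div_le_iff₀ (by norm_num at h3 ⊢; linarith)]
    nlinarith [Real.sqrt_nonneg (n:ℝ)]
  have hLn : L ≤ n := by
    have : (L:ℝ) ≤ (n:ℝ) := by nlinarith
    exact_mod_cast this
  have hn2Δ : n^2 + n < Δ := by
    have h1 : ((n^2 + n : ℕ):ℝ) < (Δ:ℝ) := by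
      push_cast
      have h4 : (4:ℝ) ≤ (n:ℝ) := by linarith
      have a1 : 4*(n:ℝ)^3 ≤ (n:ℝ)^4 := by nlinarith
      have a2 : 4*(n:ℝ)^2 ≤ (n:ℝ)^3 := by nlinarith
      have a3 : 4*(n:ℝ) ≤ (n:ℝ)^2 := by nlinarith
      linarith
    exact_mod_cast h1
  -- injectivity of the construction
  have hinj : Set.InjOn (fun r : ℕ => cVec n L Δ (r : ZMod Δ)) (Finset.range (n^2)) := by
    intro r hr r' hr' h
    replace h : cVec n L Δ (r : ZMod Δ) = cVec n L Δ (r' : ZMod Δ) := h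
    simp only [Finset.coe_range, Set.mem_Iio] at hr hr'
    set z := ((((n^2 + 0 : ℕ) : ZMod Δ)) - (r:ZMod Δ))⁻¹ with hz
    set z' := ((((n^2 + 0 : ℕ) : ZMod Δ)) - (r':ZMod Δ))⁻¹ with hz'
    have hbits : ∀ j < L, ((z.val / 2^j % 2 : ℕ) : ZMod Δ) = ((z'.val / 2^j % 2 : ℕ) : ZMod Δ) := by
      intro j hj
      have h1 := congrFun h ⟨n - 1 - (0*L + j), by omega⟩
      rw [cVec_block n L _ 0 j hL0 hj (by omega) (by omega),
        cVec_block n L _ 0 j hL0 hj (by omega) (by omega)] at h1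
      simpa [hz, hz'] using h1
    have hzz : z = z' := by
      rw [← bits_eq hΔ2L z, ← bits_eq hΔ2L z']
      exact Finset.sum_congr rfl fun j hj => by
        rw [hbits j (Finset.mem_range.mp hj)]
    have h2 : (r : ZMod Δ) = (r' : ZMod Δ) := sub_right_injective (inv_injective hzz)
    have h4 : r = r' := by
      have := congrArg ZMod.val h2
      rwa [ZMod.val_cast_of_lt (by omega), ZMod.val_cast_of_lt (by omega)] at this
    exact h4
  refine ⟨(Finset.range (n^2)).image (fun r : ℕ => cVec n L Δ (r : ZMod Δ)), ?_, ?_, ?_⟩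
  · rw [Finset.card_image_of_injOn hinj, Finset.card_range]
  · intro v hv i
    obtain ⟨r, _, rfl⟩ := Finset.mem_image.mp hv
    dsimp only [cVec]
    split
    · exact cast_mod_two _
    · exact Or.inl rfl
  · intro k hksqrt hk W hWV hWcard
    have hsqrtpos : (0:ℝ) < Real.sqrt n := Real.sqrt_pos.mpr hnpos
    have hkpos : (0:ℝ) < (k:ℝ) := lt_of_lt_of_le hsqrtpos hksqrt
    have hk2 : (2:ℝ) ≤ (k:ℝ) := le_trans (by linarith) hksqrt
    have hX1 : 1 ≤ Real.logb 2 (k:ℝ) := by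
      rw [Real.le_logb_iff_rpow_le one_lt_two hkpos, Real.rpow_one]
      exact hk2
    have hXpos : (0:ℝ) < Real.logb 2 (k:ℝ) := by linarith
    have hlogk : Real.logb 2 (n:ℝ) ≤ 2 * Real.logb 2 (k:ℝ) := by
      have h1 : Real.logb 2 (Real.sqrt n) ≤ Real.logb 2 (k:ℝ) :=
        Real.logb_le_logb_of_le one_lt_two hsqrtpos hksqrt
      have h2 : Real.logb 2 (Real.sqrt n) = Real.logb 2 (n:ℝ) / 2 := by
        rw [Real.logb, Real.logb, Real.log_sqrt (le_of_lt hnpos)]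
        ring
      linarith
    have hL9 : (L:ℝ) ≤ 9 * Real.logb 2 (k:ℝ) := by linarith
    have hmreal : (W.card:ℝ) * L ≤ (k:ℝ) := by
      have h1 : (W.card:ℝ) * (L:ℝ) ≤ ((k:ℝ) / (22 * Real.logb 2 k)) * (9 * Real.logb 2 k) := by
        apply mul_le_mul hWcard hL9 (by positivity) (by positivity)
      have h2 : ((k:ℝ) / (22 * Real.logb 2 k)) * (9 * Real.logb 2 k) = 9 * k / 22 := by
        field_simp
      linarith
    have hmLk : W.card * L ≤ k := by exact_mod_cast hmreal
    set T := k / L with hTdef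
    have hmT : W.card ≤ T := (Nat.le_div_iff_mul_le hL0).mpr hmLk
    have hTk : T ≤ k := Nat.div_le_self _ _
    have hmem : ∀ w : W, ∃ r, r < n^2 ∧ cVec n L Δ (r : ZMod Δ) = w.1 := by
      intro w
      obtain ⟨r, hr, he⟩ := Finset.mem_image.mp (hWV w.2)
      exact ⟨r, Finset.mem_range.mp hr, he⟩
    choose R hR1 hR2 using hmem
    set a : W → ZMod Δ := fun w => ((R w : ℕ) : ZMod Δ) with ha_def
    have ha : Function.Injective a := by
      intro w w' hww
      apply Subtype.ext
      rw [← hR2 w, ← hR2 w']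
      exact congrArg (cVec n L Δ) hww
    set x : ℕ → ZMod Δ := fun t => ((n^2 + t : ℕ) : ZMod Δ) with hx_def
    have hn2Δ' : n^2 < Δ := by omega
    have hxval : ∀ t < T, (x t).val = n^2 + t := by
      intro t ht
      have htn : t < n := lt_of_lt_of_le ht (le_trans hTk hk)
      exact ZMod.val_cast_of_lt ((Nat.add_lt_add_left htn _).trans hn2Δ)
    have haval : ∀ w : W, (a w).val = R w := fun w =>
      ZMod.val_cast_of_lt (lt_trans (hR1 w) hn2Δ')
    have hxinj : Set.InjOn x (Finset.range T) := by
      intro t ht t' ht' he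
      simp only [Finset.coe_range, Set.mem_Iio] at ht ht'
      have h1 := congrArg ZMod.val he
      rw [hxval t ht, hxval t' ht'] at h1
      omega
    have hxa : ∀ t < T, ∀ w : W, x t ≠ a w := by
      intro t ht w he
      have h1 := congrArg ZMod.val he
      rw [hxval t ht, haval w] at h1
      have := hR1 w
      omega
    rw [Fintype.linearIndependent_iff]
    intro g hg
    apply cauchy_core a ha x T hxinj hxa (by rw [Fintype.card_coe]; exact hmT) g
    intro t ht
    have hblock : (t+1) * L ≤ k := by
      calc (t+1)*L ≤ T*L := Nat.mul_le_mul_right L ht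
        _ ≤ k := Nat.div_mul_le_self k L
    have htn' : (t+1) * L ≤ n := le_trans hblock hk
    have hbit : ∀ j < L,
        ∑ w : W, g w * (((x t - a w)⁻¹.val / 2^j % 2 : ℕ) : ZMod Δ) = 0 := by
      intro j hj
      have hpk : t*L + j < k := by
        have he1 : (t+1)*L = t*L + L := by ring
        omega
      have hpn : t*L + j < n := lt_of_lt_of_le hpk hk
      have h0 := congrFun hg ⟨k - 1 - (t*L + j), by omega⟩
      rw [Finset.sum_apply] at h0
      simp only [Pi.smul_apply, smul_eq_mul, lastCoords, Pi.zero_apply] at h0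
      rw [← h0]
      refine Finset.sum_congr rfl fun w _ => ?_
      congr 1
      have hidx : (⟨n - k + (k - 1 - (t*L + j)), by omega⟩ : Fin n)
          = ⟨n - 1 - (t*L + j), by omega⟩ := Fin.ext (by simp only []; omega)
      rw [hidx, ← hR2 w]
      rw [cVec_block n L _ t j hL0 hj htn' hpn]
    calc ∑ w : W, g w * (x t - a w)⁻¹
        = ∑ w : W, g w * ∑ j ∈ Finset.range L,
            (2^j : ZMod Δ) * (((x t - a w)⁻¹.val / 2^j % 2 : ℕ) : ZMod Δ) := by
          refine Finset.sum_congr rfl fun w _ => ?_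
          rw [bits_eq hΔ2L]
      _ = ∑ j ∈ Finset.range L, (2^j : ZMod Δ) *
            ∑ w : W, g w * (((x t - a w)⁻¹.val / 2^j % 2 : ℕ) : ZMod Δ) := by
          simp_rw [Finset.mul_sum]
          rw [Finset.sum_comm]
          refine Finset.sum_congr rfl fun j _ => Finset.sum_congr rfl fun w _ => ?_
          ring
      _ = 0 := by
          refine Finset.sum_eq_zero fun j hj => ?_
          rw [hbit j (Finset.mem_range.mp hj), mul_zero]
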